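/- Let k be a field of characteristic ≠ 2, let ℓ/k be a quadratic field extension, and let c = (c₁, c₂, c₃) ∈ k³. Then the 4-dimensional k-algebra A(ℓ, c) is a division algebra over k if and only if the triple c is ℓ-admissible, i.e., q_c(x, y) = 0 holds only for (x, y) = (0, 0). -/
import Mathlib


open Module Function

variable {k ℓ : Type}

/-- The function `q_c : ℓ × ℓ → ℓ` associated with a triple `c = (c₁, c₂, c₃) ∈ k³`. -/
def qc [Field k] [Field ℓ] [Algebra k ℓ] (σ : ℓ ≃ₐ[k] ℓ) (c : k × k × k) (x y : ℓ) : ℓ :=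
  (1 - algebraMap k ℓ c.1) * x ^ 2 + algebraMap k ℓ c.1 * (x * σ x)
    - algebraMap k ℓ c.2.1 * y ^ 2 - algebraMap k ℓ c.2.2 * (y * σ y)

/-- A triple `c ∈ k³` is `ℓ`-admissible if `q_c` is anisotropic. -/
def IsAdmissibleTriple [Field k] [Field ℓ] [Algebra k ℓ] (σ : ℓ ≃ₐ[k] ℓ)
    (c : k × k × k) : Prop :=
  ∀ x y : ℓ, qc σ c x y = 0 → x = 0 ∧ y = 0

/-- The multiplication of the 4-dimensional `k`-algebra `A(ℓ, c)` on the underlying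
`k`-vector space `ℓ × ℓ`. -/
def Amul [Field k] [Field ℓ] [Algebra k ℓ] (σ : ℓ ≃ₐ[k] ℓ) (c : k × k × k)
    (p q : ℓ × ℓ) : ℓ × ℓ :=
  (p.1 * q.1 + (algebraMap k ℓ c.2.1 * p.2 + algebraMap k ℓ c.2.2 * σ p.2) * q.2,
   p.2 * q.1 + ((1 - algebraMap k ℓ c.1) * p.1 + algebraMap k ℓ c.1 * σ p.1) * q.2)

/-- Key elimination identity: from the two coordinates of `Amul (x,y) (w,z) = 0`
(equivalently `Amul (w',z') (w,z)` with roles matched) one deduces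
`qc x y * w = 0` and `qc x y * z = 0`. -/
lemma key_elim [Field k] [Field ℓ] [Algebra k ℓ] (σ : ℓ ≃ₐ[k] ℓ) (c : k × k × k)
    (x y w z : ℓ)
    (h1 : x * w + (algebraMap k ℓ c.2.1 * y + algebraMap k ℓ c.2.2 * σ y) * z = 0)
    (h2 : y * w + ((1 - algebraMap k ℓ c.1) * x + algebraMap k ℓ c.1 * σ x) * z = 0) :
    qc σ c x y * w = 0 ∧ qc σ c x y * z = 0 := by
  constructor
  · unfold qc
    linear_combination ((1 - algebraMap k ℓ c.1) * x + algebraMap k ℓ c.1 * σ x) * h1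
      - (algebraMap k ℓ c.2.1 * y + algebraMap k ℓ c.2.2 * σ y) * h2
  · unfold qc
    linear_combination x * h2 - y * h1

/-- Left multiplication as a `k`-linear map. -/
def Lmap [Field k] [Field ℓ] [Algebra k ℓ] (σ : ℓ ≃ₐ[k] ℓ) (c : k × k × k)
    (a : ℓ × ℓ) : (ℓ × ℓ) →ₗ[k] (ℓ × ℓ) where
  toFun p := Amul σ c a p
  map_add' p q := by
    simp only [Amul, Prod.fst_add, Prod.snd_add, Prod.mk_add_mk, Prod.mk.injEq]
    first | (constructor <;> ring) | ring
  map_smul' r p := by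
    simp only [Amul, Prod.smul_fst, Prod.smul_snd, Prod.smul_mk, RingHom.id_apply]
    simp only [Algebra.smul_def, Prod.mk.injEq]
    first | (constructor <;> ring) | ring

/-- Right multiplication as a `k`-linear map. -/
def Rmap [Field k] [Field ℓ] [Algebra k ℓ] (σ : ℓ ≃ₐ[k] ℓ) (c : k × k × k)
    (a : ℓ × ℓ) : (ℓ × ℓ) →ₗ[k] (ℓ × ℓ) where
  toFun p := Amul σ c p a
  map_add' p q := by
    simp only [Amul, Prod.fst_add, Prod.snd_add, Prod.mk_add_mk, map_add, Prod.mk.injEq]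
    first | (constructor <;> ring) | ring
  map_smul' r p := by
    simp only [Amul, Prod.smul_fst, Prod.smul_snd, Prod.smul_mk, RingHom.id_apply, map_smul]
    simp only [Algebra.smul_def, Prod.mk.injEq]
    first | (constructor <;> ring) | ring

/-- Let `k` be a field of characteristic ≠ 2, `ℓ/k` a quadratic field
extension with nontrivial `k`-automorphism `σ`, and `c = (c₁, c₂, c₃) ∈ k³`. Then the
4-dimensional `k`-algebra `A(ℓ, c)` is a division algebra over `k` (it is nonzero, and left and
right multiplication by any nonzero element are bijective) if and only if `c` is
`ℓ`-admissible. -/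
theorem divisionAlgebra_iff_admissible [Field k] [Field ℓ] [Algebra k ℓ]
    (hchar : (2 : k) ≠ 0) (hquad : finrank k ℓ = 2)
    (σ : ℓ ≃ₐ[k] ℓ) (hσ : ∃ x : ℓ, σ x ≠ x) (c : k × k × k) :
    ((∃ p : ℓ × ℓ, p ≠ 0) ∧
      ∀ a : ℓ × ℓ, a ≠ 0 →
        Function.Bijective (fun p => Amul σ c a p) ∧
        Function.Bijective (fun p => Amul σ c p a)) ↔
      IsAdmissibleTriple σ c := by
  constructor
  · rintro ⟨-, hbij⟩ x y hq
    by_contra hxy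
    rw [not_and_or] at hxy
    have hne : ((x, y) : ℓ × ℓ) ≠ 0 := by
      simp only [ne_eq, Prod.mk_eq_zero, not_and_or]
      exact hxy
    have hl := (hbij (x, y) hne).1.injective
    unfold qc at hq
    by_cases hMy : (1 - algebraMap k ℓ c.1) * x + algebraMap k ℓ c.1 * σ x = 0 ∧ y = 0
    · -- then x ≠ 0; use p = (N, -x)
      have hx : x ≠ 0 := by
        rcases hxy with h | h
        · exact h
        · exact absurd hMy.2 h
      have h0 : Amul σ c (x, y) (algebraMap k ℓ c.2.1 * y + algebraMap k ℓ c.2.2 * σ y, -x)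
          = Amul σ c (x, y) 0 := by
        unfold Amul
        simp only [Prod.fst_zero, Prod.snd_zero, mul_zero, add_zero, Prod.mk.injEq]
        constructor
        · ring
        · linear_combination (algebraMap k ℓ c.2.1 * y + algebraMap k ℓ c.2.2 * σ y) * hMy.2
            - x * hMy.1
      have := hl h0
      rw [Prod.ext_iff] at this
      exact hx (neg_eq_zero.mp this.2)
    · -- use p = (M, -y)
      have hp : (((1 - algebraMap k ℓ c.1) * x + algebraMap k ℓ c.1 * σ x, -y) : ℓ × ℓ) ≠ 0 := by
        simp only [ne_eq, Prod.mk_eq_zero, neg_eq_zero]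
        exact hMy
      have h0 : Amul σ c (x, y) ((1 - algebraMap k ℓ c.1) * x + algebraMap k ℓ c.1 * σ x, -y)
          = Amul σ c (x, y) 0 := by
        unfold Amul
        simp only [Prod.fst_zero, Prod.snd_zero, mul_zero, add_zero, Prod.mk.injEq]
        constructor
        · linear_combination hq
        · ring
      exact hp (hl h0)
  · intro hadm
    have hfin : FiniteDimensional k ℓ :=
      FiniteDimensional.of_finrank_pos (by rw [hquad]; norm_num)
    refine ⟨⟨(1, 0), by simp only [ne_eq, Prod.mk_eq_zero, one_ne_zero, false_and,
      not_false_eq_true]⟩, ?_⟩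
    intro a ha
    have hqa : qc σ c a.1 a.2 ≠ 0 := by
      intro h
      obtain ⟨h1, h2⟩ := hadm _ _ h
      exact ha (Prod.ext_iff.mpr ⟨by simpa using h1, by simpa using h2⟩)
    constructor
    · have hinj : Injective (Lmap σ c a) := by
        rw [injective_iff_map_eq_zero]
        intro p hp
        have hp' : Amul σ c a p = 0 := hp
        rw [Amul, Prod.ext_iff] at hp'
        simp only [Prod.fst_zero, Prod.snd_zero] at hp'
        obtain ⟨hw, hz⟩ := key_elim σ c a.1 a.2 p.1 p.2 hp'.1 hp'.2
        have h1 : p.1 = 0 := by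
          rcases mul_eq_zero.mp hw with h | h
          · exact absurd h hqa
          · exact h
        have h2 : p.2 = 0 := by
          rcases mul_eq_zero.mp hz with h | h
          · exact absurd h hqa
          · exact h
        exact Prod.ext_iff.mpr ⟨by simpa using h1, by simpa using h2⟩
      exact ⟨hinj, (LinearMap.injective_iff_surjective).mp hinj⟩
    · have hinj : Injective (Rmap σ c a) := by
        rw [injective_iff_map_eq_zero]
        intro p hp
        have hp' : Amul σ c p a = 0 := hp
        rw [Amul, Prod.ext_iff] at hp'
        simp only [Prod.fst_zero, Prod.snd_zero] at hp'
        obtain ⟨hw, hz⟩ := key_elim σ c p.1 p.2 a.1 a.2 hp'.1 hp'.2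
        have hqp : qc σ c p.1 p.2 = 0 := by
          by_contra hqp
          apply ha
          have ha1 : a.1 = 0 := by
            rcases mul_eq_zero.mp hw with h | h
            · exact absurd h hqp
            · exact h
          have ha2 : a.2 = 0 := by
            rcases mul_eq_zero.mp hz with h | h
            · exact absurd h hqp
            · exact h
          exact Prod.ext_iff.mpr ⟨by simpa using ha1, by simpa using ha2⟩
        obtain ⟨h1, h2⟩ := hadm _ _ hqp
        exact Prod.ext_iff.mpr ⟨by simpa using h1, by simpa using h2⟩
      exact ⟨hinj, (LinearMap.injective_iff_surjective).mp hinj⟩
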